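/- Slice cardinality comparison for zwickels: fix positive integers w, e, c with e = wc, and q = r + ℓ ∈ ℕ^m decomposed with disjoint supports. For 0 ≤ k ≤ c, the number of β ∈ ℕ^m with wk + |β| = e and β ≥ (⌈((c−k)/c)|r|⌉, 0,...,0, ⌈((c−k)/c)q_j⌉, ..., ⌈((c−k)/c)q_1⌉) componentwise is at least the number of α ∈ ℕ^m with wk + |α| = e and α ≥ ⌈((c−k)/c)·(q_m,...,q_1)⌉ componentwise. -/

import Mathlib

lemma ceil_sum_le' {ι : Type*} (s : Finset ι) (f : ι → ℚ) :
    ⌈∑ i ∈ s, f i⌉ ≤ ∑ i ∈ s, ⌈f i⌉ := by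
  induction s using Finset.cons_induction with
  | empty => simp
  | cons a s ha ih =>
    rw [Finset.sum_cons, Finset.sum_cons]
    exact (Int.ceil_add_le _ _).trans (by linarith)

/-- Slice cardinality comparison for zwickels. With `e = wc`,
`0 ≤ k ≤ c`, `q ∈ ℕ^m` decomposed as `q = r + ℓ` where `r = (q_m,...,q_{j+1},0,...,0)`
(indices `i ≥ j`) and `ℓ = (0,...,0,q_j,...,q_1)` (indices `i < j`), the slice of the
lower zwickel `Y(r,ℓ)` (bound `⌈u|r|⌉` at the top index `m-1`, `⌈u·q_i⌉` for `i < j`,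
`0` elsewhere, `u = (c-k)/c`) has at least as many elements as the slice of the upper
zwickel `Z(q)` (bound `⌈u·q_i⌉` at every index). -/
theorem stmt17 (w c e m j k : ℕ) (hw : 0 < w) (hc : 0 < c) (he : e = w * c)
    (hm : 0 < m) (hj : j < m) (hk : k ≤ c) (q : Fin m → ℕ) :
    Set.ncard {α : Fin m → ℕ | w * k + (∑ i, α i) = e ∧
        ∀ i : Fin m, ⌈((c - k : ℚ) / c) * (q i : ℚ)⌉ ≤ (α i : ℤ)} ≤
      Set.ncard {β : Fin m → ℕ | w * k + (∑ i, β i) = e ∧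
        ∀ i : Fin m,
          (if (i : ℕ) = m - 1 then
              ⌈((c - k : ℚ) / c) *
                ((∑ i' ∈ Finset.univ.filter fun i' : Fin m => j ≤ (i' : ℕ), q i' : ℕ) : ℚ)⌉
            else if (i : ℕ) < j then ⌈((c - k : ℚ) / c) * (q i : ℚ)⌉ else 0) ≤ (β i : ℤ)} := by
  set u : ℚ := ((c : ℚ) - k) / c with hu
  set S : ℕ := ∑ i' ∈ Finset.univ.filter fun i' : Fin m => j ≤ (i' : ℕ), q i' with hS
  have hu0 : 0 ≤ u := div_nonneg (sub_nonneg.mpr (by exact_mod_cast hk)) (by positivity)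
  have hceil_nonneg : ∀ i : Fin m, 0 ≤ ⌈u * (q i : ℚ)⌉ :=
    fun i => Int.ceil_nonneg (mul_nonneg hu0 (Nat.cast_nonneg _))
  have hceilS_nonneg : 0 ≤ ⌈u * (S : ℚ)⌉ :=
    Int.ceil_nonneg (mul_nonneg hu0 (Nat.cast_nonneg _))
  set bL : Fin m → ℕ := fun i => (⌈u * (q i : ℚ)⌉).toNat with hbLdef
  set b' : Fin m → ℕ := fun i =>
    if (i : ℕ) = m - 1 then (⌈u * (S : ℚ)⌉).toNat
    else if (i : ℕ) < j then (⌈u * (q i : ℚ)⌉).toNat else 0 with hb'def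
  have hbL : ∀ i, ((bL i : ℤ)) = ⌈u * (q i : ℚ)⌉ :=
    fun i => Int.toNat_of_nonneg (hceil_nonneg i)
  have hb'cast : ∀ i : Fin m,
      ((b' i : ℤ)) = (if (i : ℕ) = m - 1 then ⌈u * (S : ℚ)⌉
        else if (i : ℕ) < j then ⌈u * (q i : ℚ)⌉ else 0) := by
    intro i
    simp only [hb'def]
    split_ifs with h1 h2
    · exact Int.toNat_of_nonneg hceilS_nonneg
    · exact Int.toNat_of_nonneg (hceil_nonneg i)
    · simp
  have hjm : j ≤ m - 1 := by omega
  set i0 : Fin m := ⟨m - 1, by omega⟩ with hi0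
  -- key inequality: ∑ b' ≤ ∑ bL
  have hkey : ∑ i, b' i ≤ ∑ i, bL i := by
    have hZ : ∑ i, (b' i : ℤ) ≤ ∑ i, (bL i : ℤ) := by
      rw [← Finset.sum_filter_add_sum_filter_not Finset.univ (fun i : Fin m => j ≤ (i : ℕ))
          (fun i => (b' i : ℤ)),
        ← Finset.sum_filter_add_sum_filter_not Finset.univ (fun i : Fin m => j ≤ (i : ℕ))
          (fun i => (bL i : ℤ))]
      have hcompl : ∑ i ∈ Finset.univ.filter (fun i : Fin m => ¬ j ≤ (i : ℕ)), (b' i : ℤ)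
          = ∑ i ∈ Finset.univ.filter (fun i : Fin m => ¬ j ≤ (i : ℕ)), (bL i : ℤ) := by
        apply Finset.sum_congr rfl
        intro i hi
        rw [Finset.mem_filter] at hi
        have h1 : (i : ℕ) < j := by omega
        have h2 : (i : ℕ) ≠ m - 1 := by omega
        simp only [hb'def, hbLdef, if_neg h2, if_pos h1]
      rw [hcompl]
      apply add_le_add_left
      have hL : ∑ i ∈ Finset.univ.filter (fun i : Fin m => j ≤ (i : ℕ)), (b' i : ℤ)
          = ⌈u * (S : ℚ)⌉ := by
        have hmem : i0 ∈ Finset.univ.filter (fun i : Fin m => j ≤ (i : ℕ)) := by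
          simp [hi0, hjm]
        rw [Finset.sum_eq_single_of_mem i0 hmem]
        · simp only [hb'def, hi0]
          simp [Int.toNat_of_nonneg hceilS_nonneg]
        · intro b hbmem hb
          rw [Finset.mem_filter] at hbmem
          have h2 : (b : ℕ) ≠ m - 1 := by
            intro h; exact hb (Fin.ext (by simp [h, hi0]))
          have h3 : ¬ ((b : ℕ) < j) := by omega
          simp only [hb'def, if_neg h2, if_neg h3, Nat.cast_zero]
      rw [hL]
      calc ⌈u * (S : ℚ)⌉
          = ⌈∑ i ∈ Finset.univ.filter (fun i : Fin m => j ≤ (i : ℕ)), u * (q i : ℚ)⌉ := by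
            rw [← Finset.mul_sum, hS]; push_cast; ring_nf
        _ ≤ ∑ i ∈ Finset.univ.filter (fun i : Fin m => j ≤ (i : ℕ)), ⌈u * (q i : ℚ)⌉ :=
            ceil_sum_le' _ _
        _ = ∑ i ∈ Finset.univ.filter (fun i : Fin m => j ≤ (i : ℕ)), (bL i : ℤ) := by
            simp [hbL]
    exact_mod_cast hZ
  -- the injection
  set d : ℕ := (∑ i, bL i) - (∑ i, b' i) with hd
  set f : (Fin m → ℕ) → (Fin m → ℕ) :=
    fun α i => b' i + (α i - bL i) + (if i = i0 then d else 0) with hf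
  have hcondL : ∀ (α : Fin m → ℕ) (i : Fin m),
      (⌈u * (q i : ℚ)⌉ ≤ (α i : ℤ)) ↔ bL i ≤ α i := by
    intro α i
    rw [← hbL i]
    exact_mod_cast Iff.rfl
  -- target set is finite
  have hfin : {β : Fin m → ℕ | w * k + (∑ i, β i) = e ∧
      ∀ i : Fin m,
        (if (i : ℕ) = m - 1 then ⌈u * (S : ℚ)⌉
          else if (i : ℕ) < j then ⌈u * (q i : ℚ)⌉ else 0) ≤ (β i : ℤ)}.Finite := by
    apply (Set.finite_Icc (0 : Fin m → ℕ) (fun _ => e)).subset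
    rintro β ⟨h1, -⟩
    refine ⟨fun i => Nat.zero_le _, fun i => ?_⟩
    have h2 : β i ≤ ∑ i', β i' := Finset.single_le_sum (fun _ _ => Nat.zero_le _) (Finset.mem_univ i)
    exact le_trans h2 (h1 ▸ Nat.le_add_left _ _)
  refine Set.ncard_le_ncard_of_injOn f ?_ ?_ hfin
  · rintro α ⟨hsum, hbound⟩
    have hb : ∀ i, bL i ≤ α i := fun i => (hcondL α i).mp (hbound i)
    have hbsum : ∑ i, bL i ≤ ∑ i, α i := Finset.sum_le_sum (fun i _ => hb i)
    constructor
    · -- sum condition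
      have hsub : ∑ i, (α i - bL i) = (∑ i, α i) - (∑ i, bL i) := by
        have : (∑ i, (α i - bL i)) + ∑ i, bL i = ∑ i, α i := by
          rw [← Finset.sum_add_distrib]
          exact Finset.sum_congr rfl (fun i _ => by have := hb i; omega)
        omega
      have hfe : ∑ i, f α i = (∑ i, b' i) + (∑ i, (α i - bL i)) + d := by
        simp only [hf]
        rw [Finset.sum_add_distrib, Finset.sum_add_distrib]
        congr 1
        rw [Finset.sum_ite_eq' Finset.univ i0 (fun _ => d)]
        simp
      rw [hfe, hsub]
      omega
    · -- bound condition
      intro i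
      have : b' i ≤ f α i := by simp only [hf]; omega
      calc (if (i : ℕ) = m - 1 then ⌈u * (S : ℚ)⌉
            else if (i : ℕ) < j then ⌈u * (q i : ℚ)⌉ else 0)
          = (b' i : ℤ) := (hb'cast i).symm
        _ ≤ (f α i : ℤ) := by exact_mod_cast this
  · rintro α ⟨-, hα⟩ α' ⟨-, hα'⟩ heq
    funext i
    have h1 : bL i ≤ α i := (hcondL α i).mp (hα i)
    have h2 : bL i ≤ α' i := (hcondL α' i).mp (hα' i)
    have := congrFun heq i
    simp only [hf] at this
    omega
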